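/- Let f : X → Y be a monomorphism of simplicial sets such that for each connected component S ⊆ Y either f⁻¹(S) → S is a weak homotopy equivalence, or f⁻¹(S) = ∅ and S is weakly contractible. Then there exists a set R and a weak homotopy equivalence X ⊔ R → Y whose restriction to X equals f, where R is the set consisting of one chosen vertex in each component S with f⁻¹(S) = ∅. -/

import Mathlib

open CategoryTheory Simplicial Opposite

noncomputable section

/-- A map of simplicial sets is a weak homotopy equivalence iff its geometric realization
is a homotopy equivalence (by Whitehead's theorem, since realizations are CW complexes,
this agrees with the usual definition via homotopy groups). -/
def IsWeakHomotopyEquiv {X Y : SSet.{0}} (f : X ⟶ Y) : Prop :=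
  ∃ g : SSet.toTop.obj Y ⟶ SSet.toTop.obj X,
    ContinuousMap.Homotopic (SSet.toTop.map f ≫ g).hom (ContinuousMap.id _) ∧
    ContinuousMap.Homotopic (g ≫ SSet.toTop.map f).hom (ContinuousMap.id _)

/-- A simplicial set is weakly contractible if it is weakly equivalent to `Δ[0]`, i.e. its
realization is homotopy equivalent to that of `Δ[0]`. -/
def WeaklyContractible (S : SSet.{0}) : Prop :=
  Nonempty (ContinuousMap.HomotopyEquiv (SSet.toTop.obj S) (SSet.toTop.obj (Δ[0] : SSet.{0})))

/-- The `i`-th vertex of a simplex of a simplicial set. -/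
def SSet.vertexOf (Y : SSet) {n : SimplexCategoryᵒᵖ} (σ : Y.obj n)
    (i : Fin (n.unop.len + 1)) : Y _⦋0⦌ :=
  Y.map (SimplexCategory.const ⦋0⦌ n.unop i).op σ

lemma SSet.vertexOf_map (Y : SSet) {n m : SimplexCategoryᵒᵖ} (g : n ⟶ m) (σ : Y.obj n)
    (i : Fin (m.unop.len + 1)) :
    Y.vertexOf (Y.map g σ) i = Y.vertexOf σ (g.unop.toOrderHom i) := by
  dsimp [SSet.vertexOf]
  rw [← FunctorToTypes.map_comp_apply]
  rfl

/-- Two vertices are related if there is an edge from the first to the second. -/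
def edgeRel (Y : SSet) (a b : Y _⦋0⦌) : Prop :=
  ∃ e : Y _⦋1⦌, Y.δ 1 e = a ∧ Y.δ 0 e = b

/-- The set of connected components of a simplicial set. -/
def Pi0 (Y : SSet) : Type := Quot (edgeRel Y)

/-- The connected component of `Y` indexed by `c : Pi0 Y`, as a simplicial set: the
simplices all of whose vertices lie in `c`. -/
def componentOf (Y : SSet) (c : Pi0 Y) : SSet where
  obj n := { σ : Y.obj n // ∀ i, Quot.mk (edgeRel Y) (Y.vertexOf σ i) = c }
  map g := TypeCat.ofHom fun σ => ⟨Y.map g σ.1, fun i => by rw [SSet.vertexOf_map]; exact σ.2 _⟩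
  map_id n := by ext σ; simp
  map_comp g h := by ext σ; simp

/-- The preimage under `f : X ⟶ Y` of the connected component `c` of `Y`. -/
def preimageComponent {X Y : SSet} (f : X ⟶ Y) (c : Pi0 Y) : SSet where
  obj n := { σ : X.obj n // ∀ i, Quot.mk (edgeRel Y) (Y.vertexOf (f.app n σ) i) = c }
  map g := TypeCat.ofHom fun σ => ⟨X.map g σ.1, fun i => by
    rw [FunctorToTypes.naturality, SSet.vertexOf_map]; exact σ.2 _⟩
  map_id n := by ext σ; simp
  map_comp g h := by ext σ; simp

/-- The restriction `f⁻¹(S) ⟶ S` of `f : X ⟶ Y` over the connected component `S` of `Y`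
indexed by `c`. -/
def restrictToComponent {X Y : SSet} (f : X ⟶ Y) (c : Pi0 Y) :
    preimageComponent f c ⟶ componentOf Y c where
  app n := TypeCat.ofHom fun σ => ⟨f.app n σ.1, σ.2⟩
  naturality n m g := by
    ext σ; apply Subtype.ext; exact FunctorToTypes.naturality f g σ.1

/-- A type `R`, viewed as a discrete (constant) simplicial set. -/
def discreteSSet (R : Type) : SSet := (Functor.const SimplexCategoryᵒᵖ).obj R

end

namespace Stmt10Aux

open CategoryTheory Limits Simplicial Opposite ContinuousMap

/-! ### Topological preliminaries -/

/-- Homotopy equivalence property for a morphism in `TopCat`. -/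
def HtpyEq {P Q : TopCat} (m : P ⟶ Q) : Prop :=
  ∃ k : Q ⟶ P, ContinuousMap.Homotopic (m ≫ k).hom (ContinuousMap.id _) ∧
    ContinuousMap.Homotopic (k ≫ m).hom (ContinuousMap.id _)

lemma htpyEq_comp {P Q R : TopCat} {m : P ⟶ Q} {m' : Q ⟶ R}
    (hm : HtpyEq m) (hm' : HtpyEq m') : HtpyEq (m ≫ m') := by
  obtain ⟨k, H1, H2⟩ := hm
  obtain ⟨k', H1', H2'⟩ := hm'
  refine ⟨k' ≫ k, ?_, ?_⟩
  · have s1 : ContinuousMap.Homotopic ((m' ≫ k' : Q ⟶ Q).hom.comp (m.hom : C(P, Q)))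
        ((ContinuousMap.id Q).comp (m.hom : C(P, Q))) :=
      ContinuousMap.Homotopic.comp H1' (ContinuousMap.Homotopic.refl _)
    have s2 := ContinuousMap.Homotopic.comp (ContinuousMap.Homotopic.refl (k.hom : C(Q, P))) s1
    exact s2.trans H1
  · have s1 : ContinuousMap.Homotopic ((k ≫ m : Q ⟶ Q).hom.comp (k'.hom : C(R, Q)))
        ((ContinuousMap.id Q).comp (k'.hom : C(R, Q))) :=
      ContinuousMap.Homotopic.comp H2 (ContinuousMap.Homotopic.refl _)
    have s2 := ContinuousMap.Homotopic.comp (ContinuousMap.Homotopic.refl (m'.hom : C(Q, R))) s1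
    exact s2.trans H2'

lemma htpyEq_iso {P Q : TopCat} (e : P ≅ Q) : HtpyEq e.hom := by
  refine ⟨e.inv, ?_, ?_⟩
  · rw [e.hom_inv_id]; exact ContinuousMap.Homotopic.refl _
  · rw [e.inv_hom_id]; exact ContinuousMap.Homotopic.refl _

/-- Sigma of continuous maps. -/
def sigmaCM {ι : Type} {A B : ι → Type} [∀ i, TopologicalSpace (A i)]
    [∀ i, TopologicalSpace (B i)] (u : ∀ i, C(A i, B i)) :
    C((Σ i, A i), (Σ i, B i)) :=
  ⟨Sigma.map _root_.id fun i => u i, Continuous.sigma_map fun i => (u i).continuous⟩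

/-- Gluing fibrewise homotopies to a homotopy of sigma maps. -/
def sigmaHomotopy {ι : Type} {A B : ι → Type} [∀ i, TopologicalSpace (A i)]
    [∀ i, TopologicalSpace (B i)] {u w : ∀ i, C(A i, B i)}
    (H : ∀ i, ContinuousMap.Homotopy (u i) (w i)) :
    ContinuousMap.Homotopy (sigmaCM u) (sigmaCM w) where
  toContinuousMap := by
    refine ⟨fun p => ⟨p.2.1, H p.2.1 (p.1, p.2.2)⟩, ?_⟩
    have hc : Continuous fun p : ↥unitInterval × (Σ i, A i) =>
        (Sigma.map _root_.id (fun i (q : ↥unitInterval × A i) => (H i) q)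
          (Sigma.map _root_.id (fun i (q : A i × ↥unitInterval) => ((q.2, q.1) : ↥unitInterval × A i))
            ((Homeomorph.sigmaProdDistrib) (p.2, p.1)))) := by
      exact (Continuous.sigma_map fun i => (H i).continuous).comp
        ((Continuous.sigma_map fun i => continuous_swap).comp
          ((Homeomorph.sigmaProdDistrib).continuous.comp continuous_swap))
    refine hc.congr ?_
    rintro ⟨t, ⟨i, a⟩⟩
    rfl
  map_zero_left := by
    rintro ⟨i, a⟩
    exact congrArg (Sigma.mk i) ((H i).apply_zero a)
  map_one_left := by
    rintro ⟨i, a⟩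
    exact congrArg (Sigma.mk i) ((H i).apply_one a)

lemma htpyEq_sigma {ι : Type} {A B : ι → TopCat} (u : ∀ i, A i ⟶ B i)
    (hu : ∀ i, HtpyEq (u i)) :
    HtpyEq (show TopCat.of (Σ i, A i) ⟶ TopCat.of (Σ i, B i) from
      TopCat.ofHom (sigmaCM fun i => (u i).hom)) := by
  choose v hv1 hv2 using hu
  refine ⟨TopCat.ofHom (sigmaCM fun i => (v i).hom), ?_, ?_⟩
  · have Hs := sigmaHomotopy (u := fun i => ((u i ≫ v i : A i ⟶ A i).hom : C(A i, A i)))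
      (w := fun i => ContinuousMap.id (A i)) (fun i => ((hv1 i).some))
    exact ⟨Hs⟩
  · have Hs := sigmaHomotopy (u := fun i => ((v i ≫ u i : B i ⟶ B i).hom : C(B i, B i)))
      (w := fun i => ContinuousMap.id (B i)) (fun i => ((hv2 i).some))
    exact ⟨Hs⟩

/-- The main topological gluing lemma. -/
lemma topLemma {ι : Type} {A B : ι → TopCat.{0}} {TZ TW : TopCat}
    {a : ∀ i, A i ⟶ TZ} {b : ∀ i, B i ⟶ TW}
    (hZ : IsColimit (Cofan.mk TZ a)) (hW : IsColimit (Cofan.mk TW b))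
    (G : TZ ⟶ TW) (u : ∀ i, A i ⟶ B i)
    (hcomm : ∀ i, a i ≫ G = u i ≫ b i) (hu : ∀ i, HtpyEq (u i)) : HtpyEq G := by
  let sZ := TopCat.sigmaCofanIsColimit.{0, 0} A
  let sW := TopCat.sigmaCofanIsColimit.{0, 0} B
  let eZ : TZ ≅ (TopCat.sigmaCofan A).pt := hZ.coconePointUniqueUpToIso sZ
  let eW : TW ≅ (TopCat.sigmaCofan B).pt := hW.coconePointUniqueUpToIso sW
  let φ : (TopCat.sigmaCofan A).pt ⟶ (TopCat.sigmaCofan B).pt :=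
    TopCat.ofHom (sigmaCM fun i => (u i).hom)
  have hkey : G ≫ eW.hom = eZ.hom ≫ φ := by
    apply hZ.hom_ext
    rintro ⟨i⟩
    have e1 : (Cofan.mk TZ a).ι.app ⟨i⟩ ≫ eZ.hom = (TopCat.sigmaCofan A).ι.app ⟨i⟩ :=
      hZ.comp_coconePointUniqueUpToIso_hom sZ ⟨i⟩
    have e2 : (Cofan.mk TW b).ι.app ⟨i⟩ ≫ eW.hom = (TopCat.sigmaCofan B).ι.app ⟨i⟩ :=
      hW.comp_coconePointUniqueUpToIso_hom sW ⟨i⟩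
    have e1' : a i ≫ eZ.hom = (TopCat.sigmaCofan A).ι.app ⟨i⟩ := e1
    have e2' : b i ≫ eW.hom = (TopCat.sigmaCofan B).ι.app ⟨i⟩ := e2
    have e3 : (TopCat.sigmaCofan A).ι.app ⟨i⟩ ≫ φ = u i ≫ (TopCat.sigmaCofan B).ι.app ⟨i⟩ := by
      apply TopCat.hom_ext
      apply ContinuousMap.ext
      intro x
      rfl
    calc (Cofan.mk TZ a).ι.app ⟨i⟩ ≫ G ≫ eW.hom
        = (a i ≫ G) ≫ eW.hom := by simp [Cofan.mk]
      _ = (u i ≫ b i) ≫ eW.hom := by rw [hcomm]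
      _ = u i ≫ (TopCat.sigmaCofan B).ι.app ⟨i⟩ := by rw [Category.assoc, e2']
      _ = (TopCat.sigmaCofan A).ι.app ⟨i⟩ ≫ φ := e3.symm
      _ = a i ≫ eZ.hom ≫ φ := by rw [← Category.assoc, e1']
      _ = (Cofan.mk TZ a).ι.app ⟨i⟩ ≫ eZ.hom ≫ φ := rfl
  have hG : G = eZ.hom ≫ φ ≫ eW.inv := by
    rw [← Category.assoc, ← hkey, Category.assoc, Iso.hom_inv_id, Category.comp_id]
  rw [hG]
  exact htpyEq_comp (htpyEq_iso eZ) (htpyEq_comp (htpyEq_sigma u hu) (htpyEq_iso eW.symm))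

/-- A colimit criterion for cofans in `Type`. -/
noncomputable def isColimitOfBijective {ι : Type} {F : Discrete ι ⥤ Type} (c : Cocone F)
    (hb : Function.Bijective fun p : Σ i, F.obj ⟨i⟩ => c.ι.app ⟨p.1⟩ p.2) : IsColimit c :=
  letI e := Equiv.ofBijective _ hb
  { desc := fun s => TypeCat.ofHom fun x => s.ι.app ⟨(e.symm x).1⟩ (e.symm x).2
    fac := fun s j => by
      ext a
      have h : e.symm (c.ι.app j a) = ⟨j.as, a⟩ := by
        apply e.injective
        rw [Equiv.apply_symm_apply]
        rfl
      show s.ι.app ⟨(e.symm (c.ι.app j a)).1⟩ (e.symm (c.ι.app j a)).2 = s.ι.app j a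
      rw [h]
    uniq := fun s m w => by
      ext x
      obtain ⟨p, rfl⟩ := hb.2 x
      have hw := ConcreteCategory.congr_hom (w ⟨p.1⟩) p.2
      have h : e.symm (c.ι.app ⟨p.1⟩ p.2) = p := by
        apply e.injective
        rw [Equiv.apply_symm_apply]
        rfl
      show m (c.ι.app ⟨p.1⟩ p.2) = s.ι.app ⟨(e.symm (c.ι.app ⟨p.1⟩ p.2)).1⟩ _
      rw [h]
      exact hw }

/-! ### Simplicial preliminaries -/

/-- The edge map `⦋1⦌ ⟶ m` sending `0 ↦ i`, `1 ↦ j`. -/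
def edgeHom {m : SimplexCategory} (i j : Fin (m.len + 1)) (hij : i ≤ j) :
    (⦋1⦌ : SimplexCategory) ⟶ m :=
  SimplexCategory.Hom.mk ⟨fun t => if t = 0 then i else j, by
    intro a b hab
    dsimp only []
    by_cases ha : a = 0
    · rw [if_pos ha]
      by_cases hb : b = 0
      · rw [if_pos hb]
      · rw [if_neg hb]; exact hij
    · have hb : b ≠ 0 := fun hb0 => ha (Fin.le_zero_iff.mp (hb0 ▸ hab))
      rw [if_neg ha, if_neg hb]⟩

lemma hom_from_zero_ext {m : SimplexCategory} (f g : (⦋0⦌ : SimplexCategory) ⟶ m)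
    (h : f.toOrderHom 0 = g.toOrderHom 0) : f = g := by
  rw [SimplexCategory.eq_const_of_zero f, SimplexCategory.eq_const_of_zero g, h]

lemma δ_one_edgeHom {m : SimplexCategory} (i j : Fin (m.len + 1)) (hij : i ≤ j) :
    SimplexCategory.δ 1 ≫ edgeHom i j hij = SimplexCategory.const ⦋0⦌ m i := by
  apply hom_from_zero_ext
  rfl

lemma δ_zero_edgeHom {m : SimplexCategory} (i j : Fin (m.len + 1)) (hij : i ≤ j) :
    SimplexCategory.δ 0 ≫ edgeHom i j hij = SimplexCategory.const ⦋0⦌ m j := by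
  apply hom_from_zero_ext
  rfl

lemma vertex_comp_eq (Y : SSet) {n : SimplexCategoryᵒᵖ} (σ : Y.obj n)
    (i j : Fin (n.unop.len + 1)) :
    Quot.mk (edgeRel Y) (Y.vertexOf σ i) = Quot.mk (edgeRel Y) (Y.vertexOf σ j) := by
  have key : ∀ (i j : Fin (n.unop.len + 1)), i ≤ j →
      Quot.mk (edgeRel Y) (Y.vertexOf σ i) = Quot.mk (edgeRel Y) (Y.vertexOf σ j) := by
    intro i j hij
    apply Quot.sound
    refine ⟨Y.map (edgeHom i j hij).op σ, ?_, ?_⟩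
    · show Y.map (SimplexCategory.δ 1).op (Y.map (edgeHom i j hij).op σ) = _
      rw [← FunctorToTypes.map_comp_apply, ← op_comp, δ_one_edgeHom]
      rfl
    · show Y.map (SimplexCategory.δ 0).op (Y.map (edgeHom i j hij).op σ) = _
      rw [← FunctorToTypes.map_comp_apply, ← op_comp, δ_zero_edgeHom]
      rfl
  rcases le_total i j with hij | hij
  · exact key i j hij
  · exact (key j i hij).symm

/-- The connected component of a simplex. -/
def compOf (Y : SSet) {n : SimplexCategoryᵒᵖ} (σ : Y.obj n) : Pi0 Y :=
  Quot.mk (edgeRel Y) (Y.vertexOf σ 0)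

lemma compOf_spec (Y : SSet) {n : SimplexCategoryᵒᵖ} (σ : Y.obj n) :
    ∀ i, Quot.mk (edgeRel Y) (Y.vertexOf σ i) = compOf Y σ :=
  fun i => vertex_comp_eq Y σ i 0

lemma compOf_map (Y : SSet) {n m : SimplexCategoryᵒᵖ} (g : n ⟶ m) (σ : Y.obj n) :
    compOf Y (Y.map g σ) = compOf Y σ := by
  show Quot.mk (edgeRel Y) (Y.vertexOf (Y.map g σ) 0) = _
  rw [SSet.vertexOf_map]
  exact compOf_spec Y σ _

lemma vertexOf_zero (Y : SSet) (v : Y _⦋0⦌) (i : Fin 1) : Y.vertexOf v i = v := by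
  show Y.map (SimplexCategory.const ⦋0⦌ ⦋0⦌ i).op v = v
  have : SimplexCategory.const ⦋0⦌ ⦋0⦌ i = 𝟙 (⦋0⦌ : SimplexCategory) :=
    SimplexCategory.hom_zero_zero _
  rw [this, op_id, FunctorToTypes.map_id_apply]

/-- The totally degenerate simplex at a vertex. -/
def ptSimplex (Y : SSet) (v : Y _⦋0⦌) (n : SimplexCategoryᵒᵖ) : Y.obj n :=
  Y.map (SimplexCategory.const n.unop ⦋0⦌ 0).op v

lemma vertexOf_ptSimplex (Y : SSet) (v : Y _⦋0⦌) (n : SimplexCategoryᵒᵖ)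
    (i : Fin (n.unop.len + 1)) : Y.vertexOf (ptSimplex Y v n) i = v := by
  show Y.vertexOf (Y.map (SimplexCategory.const n.unop ⦋0⦌ 0).op v) i = v
  rw [SSet.vertexOf_map]
  exact vertexOf_zero Y v _

lemma ptSimplex_natural (Y : SSet) (v : Y _⦋0⦌) {n m : SimplexCategoryᵒᵖ} (g : n ⟶ m) :
    Y.map g (ptSimplex Y v n) = ptSimplex Y v m := by
  show Y.map g (Y.map (SimplexCategory.const n.unop ⦋0⦌ 0).op v) = _
  rw [← FunctorToTypes.map_comp_apply]
  have : (SimplexCategory.const n.unop ⦋0⦌ 0).op ≫ g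
      = (SimplexCategory.const m.unop ⦋0⦌ 0).op := by
    have h2 : g.unop ≫ SimplexCategory.const n.unop ⦋0⦌ 0
        = SimplexCategory.const m.unop ⦋0⦌ 0 := by
      rw [SimplexCategory.eq_const_to_zero (g.unop ≫ SimplexCategory.const n.unop ⦋0⦌ 0)]
    rw [← h2]
    rfl
  rw [this]
  rfl

/-! ### Sigma decompositions of simplicial sets -/

noncomputable section PartC

/-- Sigma of the components of `Y`. -/
def compSigma (Y : SSet) : SSet where
  obj n := Σ c : Pi0 Y, (componentOf Y c).obj n
  map g := TypeCat.ofHom fun p => ⟨p.1, (componentOf Y p.1).map g p.2⟩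
  map_id n := by
    refine ConcreteCategory.hom_ext _ _ fun p => ?_
    exact congrArg (Sigma.mk (β := fun c => (componentOf Y c).obj _) p.1) (ConcreteCategory.congr_hom ((componentOf Y p.1).map_id n) p.2)
  map_comp g h := by
    refine ConcreteCategory.hom_ext _ _ fun p => ?_
    exact congrArg (Sigma.mk (β := fun c => (componentOf Y c).obj _) p.1) (ConcreteCategory.congr_hom ((componentOf Y p.1).map_comp g h) p.2)

def compInj (Y : SSet) (c : Pi0 Y) : componentOf Y c ⟶ compSigma Y where
  app n := TypeCat.ofHom fun σ => ⟨c, σ⟩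
  naturality _ _ _ := rfl

lemma compSigma_ext {Y : SSet} {n : SimplexCategoryᵒᵖ}
    {p q : Σ c : Pi0 Y, (componentOf Y c).obj n}
    (h1 : p.1 = q.1) (h2 : p.2.1 = q.2.1) : p = q := by
  obtain ⟨c, σ, hσ⟩ := p
  obtain ⟨c', σ', hσ'⟩ := q
  dsimp at h1 h2
  subst h1
  subst h2
  rfl

def compSigmaIso (Y : SSet) : compSigma Y ≅ Y where
  hom := { app := fun n => TypeCat.ofHom fun p => p.2.1, naturality := fun _ _ _ => rfl }
  inv :=
    { app := fun n => TypeCat.ofHom fun σ => ⟨compOf Y σ, σ, compOf_spec Y σ⟩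
      naturality := fun n m g => by
        ext σ
        exact compSigma_ext (compOf_map Y g σ) rfl }
  hom_inv_id := by
    ext n p
    exact compSigma_ext (p.2.2 0) rfl
  inv_hom_id := by
    ext n σ
    rfl

def compCofanColimit (Y : SSet) : IsColimit (Cofan.mk (compSigma Y) (fun c => compInj Y c)) := by
  apply evaluationJointlyReflectsColimits
  intro n
  exact isColimitOfBijective _ ⟨fun p q hpq => hpq, fun x => ⟨x, rfl⟩⟩

variable {X Y : SSet} (f : X ⟶ Y)

/-- The index set `R`: components with empty preimage. -/
def RSet : Type := {c : Pi0 Y // ∀ n, IsEmpty ((preimageComponent f c).obj n)}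

/-- The piece over a component `c` inside `X ⨿ R`. -/
def pieceA (c : Pi0 Y) : SSet where
  obj n := (preimageComponent f c).obj n ⊕ {r : RSet f // r.1 = c}
  map g := TypeCat.ofHom (Sum.map ((preimageComponent f c).map g) _root_.id)
  map_id n := by
    ext x
    cases x with
    | inl p => exact congrArg Sum.inl (ConcreteCategory.congr_hom ((preimageComponent f c).map_id n) p)
    | inr r => rfl
  map_comp g h' := by
    ext x
    cases x with
    | inl p => exact congrArg Sum.inl (ConcreteCategory.congr_hom ((preimageComponent f c).map_comp g h') p)
    | inr r => rfl

def pieceMap (c : Pi0 Y) : pieceA f c ⟶ componentOf Y c where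
  app n := TypeCat.ofHom fun x =>
    match x with
    | Sum.inl p => ⟨f.app n p.1, p.2⟩
    | Sum.inr _ => ⟨ptSimplex Y (Quot.out c) n, fun i => by
        rw [vertexOf_ptSimplex]; exact Quot.out_eq c⟩
  naturality n m g := by
    ext x
    cases x with
    | inl p => exact Subtype.ext (by exact FunctorToTypes.naturality f g p.1)
    | inr r => exact Subtype.ext (ptSimplex_natural Y (Quot.out c) g).symm

def pieceSigma : SSet where
  obj n := Σ c : Pi0 Y, (pieceA f c).obj n
  map g := TypeCat.ofHom fun p => ⟨p.1, (pieceA f p.1).map g p.2⟩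
  map_id n := by
    refine ConcreteCategory.hom_ext _ _ fun p => ?_
    exact congrArg (Sigma.mk (β := fun c => (pieceA f c).obj _) p.1) (ConcreteCategory.congr_hom ((pieceA f p.1).map_id n) p.2)
  map_comp g h' := by
    refine ConcreteCategory.hom_ext _ _ fun p => ?_
    exact congrArg (Sigma.mk (β := fun c => (pieceA f c).obj _) p.1) (ConcreteCategory.congr_hom ((pieceA f p.1).map_comp g h') p.2)

def pieceInj (c : Pi0 Y) : pieceA f c ⟶ pieceSigma f where
  app n := TypeCat.ofHom fun x => ⟨c, x⟩
  naturality _ _ _ := rfl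

def pieceCofanColimit : IsColimit (Cofan.mk (pieceSigma f) (fun c => pieceInj f c)) := by
  apply evaluationJointlyReflectsColimits
  intro n
  exact isColimitOfBijective _ ⟨fun p q hpq => hpq, fun x => ⟨x, rfl⟩⟩

def wSigma : pieceSigma f ⟶ compSigma Y where
  app n := TypeCat.ofHom fun p => ⟨p.1, (pieceMap f p.1).app n p.2⟩
  naturality n m g := by
    ext p
    exact congrArg (Sigma.mk p.1) (ConcreteCategory.congr_hom ((pieceMap f p.1).naturality g) p.2)

lemma piece_mk_inl_eq {n : SimplexCategoryᵒᵖ} {c c' : Pi0 Y}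
    {p : (preimageComponent f c).obj n} {p' : (preimageComponent f c').obj n}
    (hc : c = c') (hσ : p.1 = p'.1) :
    (⟨c, Sum.inl p⟩ : Σ c, (pieceA f c).obj n) = ⟨c', Sum.inl p'⟩ := by
  subst hc
  obtain ⟨σ, hσ1⟩ := p
  obtain ⟨σ', hσ2⟩ := p'
  dsimp at hσ
  subst hσ
  rfl

lemma piece_mk_inr_eq {n : SimplexCategoryᵒᵖ} {c c' : Pi0 Y}
    {r : {r : RSet f // r.1 = c}} {r' : {r : RSet f // r.1 = c'}}
    (hc : c = c') (hr : r.1 = r'.1) :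
    (⟨c, Sum.inr r⟩ : Σ c, (pieceA f c).obj n) = ⟨c', Sum.inr r'⟩ := by
  subst hc
  obtain ⟨a, ha⟩ := r
  obtain ⟨a', ha'⟩ := r'
  dsimp at hr
  subst hr
  rfl

def phiTo : X ⟶ pieceSigma f where
  app n := TypeCat.ofHom fun σ => ⟨compOf Y (f.app n σ), Sum.inl ⟨σ, fun i => compOf_spec Y (f.app n σ) i⟩⟩
  naturality n m g := by
    ext σ
    refine piece_mk_inl_eq f ?_ ?_
    · exact (congrArg (compOf Y) (FunctorToTypes.naturality f g σ)).trans (compOf_map Y g _)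
    · rfl

def etaTo : discreteSSet (RSet f) ⟶ pieceSigma f where
  app n := TypeCat.ofHom fun r => ⟨r.1, Sum.inr ⟨r, rfl⟩⟩
  naturality _ _ _ := rfl

def phiFrom : pieceSigma f ⟶ X ⨿ discreteSSet (RSet f) where
  app n := TypeCat.ofHom fun p =>
    match p.2 with
    | Sum.inl q => (coprod.inl : X ⟶ X ⨿ discreteSSet (RSet f)).app n q.1
    | Sum.inr r => (coprod.inr : discreteSSet (RSet f) ⟶ X ⨿ discreteSSet (RSet f)).app n r.1
  naturality n m g := by
    ext p
    obtain ⟨c, x⟩ := p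
    cases x with
    | inl q => exact FunctorToTypes.naturality (coprod.inl : X ⟶ X ⨿ discreteSSet (RSet f)) g q.1
    | inr r => exact FunctorToTypes.naturality (coprod.inr : discreteSSet (RSet f) ⟶ X ⨿ discreteSSet (RSet f)) g r.1

def phiIso : X ⨿ discreteSSet (RSet f) ≅ pieceSigma f where
  hom := coprod.desc (phiTo f) (etaTo f)
  inv := phiFrom f
  hom_inv_id := by
    apply coprod.hom_ext
    · rw [Category.comp_id, ← Category.assoc, coprod.inl_desc]
      ext n σ
      rfl
    · rw [Category.comp_id, ← Category.assoc, coprod.inr_desc]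
      ext n r
      rfl
  inv_hom_id := by
    ext n p
    obtain ⟨c, x⟩ := p
    cases x with
    | inl q =>
      have h1 := ConcreteCategory.congr_hom (congrArg (fun (t : X ⟶ pieceSigma f) => t.app n)
        (coprod.inl_desc (phiTo f) (etaTo f))) q.1
      exact Eq.trans h1 (piece_mk_inl_eq f (q.2 0) rfl)
    | inr r =>
      have h1 := ConcreteCategory.congr_hom (congrArg (fun (t : discreteSSet (RSet f) ⟶ pieceSigma f) => t.app n)
        (coprod.inr_desc (phiTo f) (etaTo f))) r.1
      exact Eq.trans h1 (piece_mk_inr_eq f r.2 rfl)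

def gR : discreteSSet (RSet f) ⟶ Y where
  app n := TypeCat.ofHom fun r => ptSimplex Y (Quot.out r.1) n
  naturality n m g := by
    ext r
    exact (ptSimplex_natural Y (Quot.out r.1) g).symm

lemma g_factor :
    coprod.desc f (gR f) = (phiIso f).hom ≫ wSigma f ≫ (compSigmaIso Y).hom := by
  apply coprod.hom_ext
  · have h1 : coprod.inl ≫ (phiIso f).hom = phiTo f := coprod.inl_desc _ _
    rw [coprod.inl_desc, ← Category.assoc, h1]
    ext n σ
    rfl
  · have h1 : coprod.inr ≫ (phiIso f).hom = etaTo f := coprod.inr_desc _ _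
    rw [coprod.inr_desc, ← Category.assoc, h1]
    ext n r
    rfl

end PartC

/-! ### Contractibility and emptiness -/

noncomputable section PartD

lemma homotopic_contr {P Q : Type} [TopologicalSpace P] [TopologicalSpace Q]
    [ContractibleSpace Q] (u v : C(P, Q)) : u.Homotopic v := by
  obtain ⟨y, hy⟩ := id_nullhomotopic Q
  have h1 : u.Homotopic (ContinuousMap.const P y) := by
    have := ContinuousMap.Homotopic.comp hy (ContinuousMap.Homotopic.refl u)
    simpa using this
  have h2 : v.Homotopic (ContinuousMap.const P y) := by
    have := ContinuousMap.Homotopic.comp hy (ContinuousMap.Homotopic.refl v)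
    simpa using this
  exact h1.trans h2.symm

lemma htpyEq_contractible {P Q : TopCat.{0}} [ContractibleSpace ↥P] [ContractibleSpace ↥Q]
    (m : P ⟶ Q) : HtpyEq m := by
  obtain ⟨p⟩ := (inferInstance : PathConnectedSpace ↥P).nonempty
  exact ⟨TopCat.ofHom (ContinuousMap.const ↥Q p), homotopic_contr _ _, homotopic_contr _ _⟩

def delta0Iso : (Δ[0] : SSet) ≅ yoneda.obj (⦋0⦌ : SimplexCategory) where
  hom := { app := fun n => TypeCat.ofHom fun x => x.down, naturality := fun _ _ _ => rfl }
  inv := { app := fun n => TypeCat.ofHom fun x => ULift.up x, naturality := fun _ _ _ => rfl }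
  hom_inv_id := by ext n x
  inv_hom_id := by ext n x; rfl

lemma contractible_delta0 : ContractibleSpace (SSet.toTop.obj (Δ[0] : SSet)) := by
  have i : SSet.toTop.obj (Δ[0] : SSet) ≅ SimplexCategory.toTop.obj (⦋0⦌ : SimplexCategory) :=
    SSet.toTopSimplex.app (⦋0⦌ : SimplexCategory)
  haveI h2 : ContractibleSpace ↥(SimplexCategory.toTop.obj (⦋0⦌ : SimplexCategory)) :=
    inferInstance
  exact (TopCat.homeoOfIso i).contractibleSpace

def emptyIsInitial {P : SSet} (hp : ∀ n, IsEmpty (P.obj n)) : IsInitial P :=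
  IsInitial.ofUniqueHom
    (fun W => { app := fun n => TypeCat.ofHom fun x => ((hp n).false x).elim
                naturality := fun n m g => by ext x; exact ((hp n).false x).elim })
    (fun W m => by ext n x; exact ((hp n).false x).elim)

lemma toTop_empty {P : SSet} (hp : ∀ n, IsEmpty (P.obj n)) : IsEmpty (SSet.toTop.obj P) := by
  haveI := sSetTopAdj.leftAdjoint_preservesColimits
  have hi : IsInitial (SSet.toTop.obj P) := (emptyIsInitial hp).isInitialObj SSet.toTop P
  exact ⟨fun x => (hi.to (TopCat.of PEmpty) x).elim⟩

def vertexHom (Y : SSet) (c : Pi0 Y) : (Δ[0] : SSet) ⟶ componentOf Y c where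
  app n := TypeCat.ofHom fun _ => ⟨ptSimplex Y (Quot.out c) n, fun i => by
    rw [vertexOf_ptSimplex]; exact Quot.out_eq c⟩
  naturality n m g := by
    ext x
    exact Subtype.ext (ptSimplex_natural Y (Quot.out c) g).symm

lemma comp_nonempty (Y : SSet) (c : Pi0 Y) : Nonempty (SSet.toTop.obj (componentOf Y c)) := by
  haveI := contractible_delta0
  obtain ⟨x⟩ := (inferInstance : PathConnectedSpace (SSet.toTop.obj (Δ[0] : SSet))).nonempty
  exact ⟨SSet.toTop.map (vertexHom Y c) x⟩

def uniqueSSetIso (P Q : SSet) (hP : ∀ n, Unique (P.obj n)) (hQ : ∀ n, Unique (Q.obj n)) :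
    P ≅ Q where
  hom := { app := fun n => TypeCat.ofHom fun _ => (hQ n).default
           naturality := fun n m g => by
             ext x
             exact (((hQ m).uniq _).trans ((hQ m).uniq _).symm) }
  inv := { app := fun n => TypeCat.ofHom fun _ => (hP n).default
           naturality := fun n m g => by
             ext x
             exact (((hP m).uniq _).trans ((hP m).uniq _).symm) }
  hom_inv_id := by
    ext n x
    exact (((hP n).uniq _).trans ((hP n).uniq _).symm)
  inv_hom_id := by
    ext n x
    exact (((hQ n).uniq _).trans ((hQ n).uniq _).symm)

def uniqueDelta0 : ∀ n, Unique ((Δ[0] : SSet).obj n) := fun n =>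
  { default := ULift.up (SimplexCategory.const n.unop ⦋0⦌ 0)
    uniq := fun a => congrArg ULift.up (SimplexCategory.eq_const_to_zero a.down) }

variable {X Y : SSet} (f : X ⟶ Y)

def uniquePieceA (c : Pi0 Y) (hc : ∀ n, IsEmpty ((preimageComponent f c).obj n)) :
    ∀ n, Unique ((pieceA f c).obj n) := fun n =>
  { default := Sum.inr ⟨⟨c, hc⟩, rfl⟩
    uniq := fun a => by
      cases a with
      | inl p => exact ((hc n).false p).elim
      | inr r => exact congrArg Sum.inr (Subtype.ext (Subtype.ext r.2)) }

def pieceRestrictIso (c : Pi0 Y) (hno : {r : RSet f // r.1 = c} → False) :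
    pieceA f c ≅ preimageComponent f c where
  hom := { app := fun n => TypeCat.ofHom fun x => Sum.elim _root_.id (fun r => (hno r).elim) x
           naturality := fun n m g => by
             ext x
             cases x with
             | inl p => rfl
             | inr r => exact (hno r).elim }
  inv := { app := fun n => TypeCat.ofHom fun p => Sum.inl p, naturality := fun _ _ _ => rfl }
  hom_inv_id := by
    ext n x
    cases x with
    | inl p => rfl
    | inr r => exact (hno r).elim
  inv_hom_id := by
    ext n p
    rfl

lemma pieceMap_htpyEq
    (h : ∀ c : Pi0 Y, IsWeakHomotopyEquiv (restrictToComponent f c) ∨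
      ((∀ n, IsEmpty ((preimageComponent f c).obj n)) ∧ WeaklyContractible (componentOf Y c)))
    (c : Pi0 Y) : HtpyEq (SSet.toTop.map (pieceMap f c)) := by
  by_cases hc : ∀ n, IsEmpty ((preimageComponent f c).obj n)
  · have hcon : WeaklyContractible (componentOf Y c) := by
      rcases h c with hwe | ⟨_, hcon⟩
      · exfalso
        obtain ⟨k, _, _⟩ := hwe
        obtain ⟨pt⟩ := comp_nonempty Y c
        exact (toTop_empty hc).false (k pt)
      · exact hcon
    haveI h1 : ContractibleSpace ↥(SSet.toTop.obj (componentOf Y c)) := by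
      obtain ⟨e⟩ := hcon
      haveI := contractible_delta0
      exact e.contractibleSpace
    haveI h2 : ContractibleSpace ↥(SSet.toTop.obj (pieceA f c)) := by
      haveI := contractible_delta0
      have i := SSet.toTop.mapIso
        (uniqueSSetIso (pieceA f c) (Δ[0] : SSet) (uniquePieceA f c hc) uniqueDelta0)
      exact (TopCat.homeoOfIso i).contractibleSpace
    exact htpyEq_contractible _
  · push_neg at hc
    obtain ⟨n₀, hn₀⟩ := hc
    obtain ⟨x₀⟩ := hn₀
    have hwe : IsWeakHomotopyEquiv (restrictToComponent f c) := by
      rcases h c with hwe | ⟨he, _⟩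
      · exact hwe
      · exact ((he n₀).false x₀).elim
    have hno : {r : RSet f // r.1 = c} → False := fun r =>
      ((show ∀ n, IsEmpty ((preimageComponent f c).obj n) from r.2 ▸ r.1.2) n₀).false x₀
    have hfac : pieceMap f c = (pieceRestrictIso f c hno).hom ≫ restrictToComponent f c := by
      ext n x
      cases x with
      | inl p => rfl
      | inr r => exact (hno r).elim
    rw [hfac, Functor.map_comp]
    exact htpyEq_comp (htpyEq_iso (SSet.toTop.mapIso (pieceRestrictIso f c hno))) hwe

def mapCofanIsColimit {ι : Type} (A : ι → SSet) {Z : SSet} (κ : ∀ i, A i ⟶ Z)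
    (hZ : IsColimit (Cofan.mk Z κ)) :
    IsColimit (Cofan.mk (SSet.toTop.obj Z) (fun i => SSet.toTop.map (κ i))) := by
  haveI := sSetTopAdj.leftAdjoint_preservesColimits
  have h1 := isColimitOfPreserves SSet.toTop hZ
  let α : Discrete.functor (fun i => SSet.toTop.obj (A i)) ≅ Discrete.functor A ⋙ SSet.toTop :=
    Discrete.natIso (fun i => Iso.refl _)
  have h2 := (IsColimit.precomposeHomEquiv α _).symm h1
  refine h2.ofIsoColimit ?_
  refine Cocones.ext (Iso.refl _) ?_
  rintro ⟨i⟩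
  simp [α]

end PartD

end Stmt10Aux




open Limits in
/-- if `f : X ⟶ Y` is a monomorphism of simplicial sets such that for each
connected component `S` of `Y` either `f⁻¹(S) ⟶ S` is a weak homotopy equivalence, or
`f⁻¹(S) = ∅` and `S` is weakly contractible, then there is a set `R` and a weak homotopy
equivalence `X ⊔ R ⟶ Y` restricting to `f` on `X`. -/
theorem stmt10 {X Y : SSet} (f : X ⟶ Y) [Mono f]
    (h : ∀ c : Pi0 Y,
      IsWeakHomotopyEquiv (restrictToComponent f c) ∨
      ((∀ n, IsEmpty ((preimageComponent f c).obj n)) ∧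
        WeaklyContractible (componentOf Y c))) :
    ∃ (R : Type) (g : X ⨿ discreteSSet R ⟶ Y),
      IsWeakHomotopyEquiv g ∧ coprod.inl ≫ g = f := by
  classical
  refine ⟨Stmt10Aux.RSet f, coprod.desc f (Stmt10Aux.gR f), ?_, coprod.inl_desc _ _⟩
  show Stmt10Aux.HtpyEq (SSet.toTop.map (coprod.desc f (Stmt10Aux.gR f)))
  rw [Stmt10Aux.g_factor f, Functor.map_comp, Functor.map_comp]
  refine Stmt10Aux.htpyEq_comp (Stmt10Aux.htpyEq_iso (SSet.toTop.mapIso (Stmt10Aux.phiIso f)))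
    (Stmt10Aux.htpyEq_comp ?_
      (Stmt10Aux.htpyEq_iso (SSet.toTop.mapIso (Stmt10Aux.compSigmaIso Y))))
  exact Stmt10Aux.topLemma
    (Stmt10Aux.mapCofanIsColimit _ _ (Stmt10Aux.pieceCofanColimit f))
    (Stmt10Aux.mapCofanIsColimit _ _ (Stmt10Aux.compCofanColimit Y))
    (SSet.toTop.map (Stmt10Aux.wSigma f))
    (fun c => SSet.toTop.map (Stmt10Aux.pieceMap f c))
    (fun c => by
      rw [← Functor.map_comp, ← Functor.map_comp]
      congr 1)
    (fun c => Stmt10Aux.pieceMap_htpyEq f h c)
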